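/- Let F : ℝ → ℝ be the Gumbel min cumulative distribution function, F(t) = 1 − exp(−exp(t)). Then both t ↦ log F(t) and t ↦ log(1 − F(t)) are strictly concave on ℝ. -/

import Mathlib

open Real

lemma gumbel_aux_pos (t : ℝ) : 0 < 1 - Real.exp (-Real.exp t) := by
  have : Real.exp (-Real.exp t) < 1 := by
    rw [Real.exp_lt_one_iff]
    simpa using Real.exp_pos t
  linarith

lemma gumbel_hasDerivAt (t : ℝ) :
    HasDerivAt (fun t : ℝ => Real.log (1 - Real.exp (-Real.exp t)))
      (Real.exp t / (Real.exp (Real.exp t) - 1)) t := by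
  have h1 : HasDerivAt (fun t : ℝ => -Real.exp t) (-Real.exp t) t :=
    (Real.hasDerivAt_exp t).neg
  have h2 : HasDerivAt (fun t : ℝ => Real.exp (-Real.exp t))
      (Real.exp (-Real.exp t) * (-Real.exp t)) t :=
    (Real.hasDerivAt_exp _).comp t h1
  have h3 : HasDerivAt (fun t : ℝ => 1 - Real.exp (-Real.exp t))
      (Real.exp (-Real.exp t) * Real.exp t) t := by
    have := (hasDerivAt_const t (1:ℝ)).sub h2
    exact this.congr_deriv (by ring)
  have hpos := gumbel_aux_pos t
  have h4 := h3.log (ne_of_gt hpos)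
  convert h4 using 1
  have he : Real.exp (Real.exp t) ≠ 0 := (Real.exp_pos _).ne'
  rw [Real.exp_neg]
  field_simp

lemma gumbel_slope (a b : ℝ) (ha : 0 < a) (hab : a < b) :
    (Real.exp a - 1) / a < (Real.exp b - 1) / b := by
  have hb : 0 < b := ha.trans hab
  have hcomb : a = (1 - a/b) • (0:ℝ) + (a/b) • b := by
    field_simp
    rw [smul_eq_mul, smul_eq_mul, mul_zero, zero_add, div_mul_cancel₀ a hb.ne']
  have hlt : Real.exp a < (1 - a/b) * Real.exp 0 + (a/b) * Real.exp b := by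
    have := strictConvexOn_exp.2 (Set.mem_univ (0:ℝ)) (Set.mem_univ b)
      (by positivity : (0:ℝ) ≠ b).symm.symm
    have hne : (0:ℝ) ≠ b := hb.ne
    have h1 : 0 < 1 - a/b := by
      rw [sub_pos, div_lt_one hb]; exact hab
    have h2 : 0 < a/b := by positivity
    have h3 : (1 - a/b) + a/b = 1 := by ring
    have := strictConvexOn_exp.2 (Set.mem_univ (0:ℝ)) (Set.mem_univ b) hne h1 h2 h3
    calc Real.exp a = Real.exp ((1 - a/b) • (0:ℝ) + (a/b) • b) := by rw [← hcomb]
      _ < (1 - a/b) * Real.exp 0 + (a/b) * Real.exp b := this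
  rw [Real.exp_zero] at hlt
  rw [div_lt_div_iff₀ ha hb]
  have h := mul_lt_mul_of_pos_right hlt hb
  field_simp at h
  nlinarith

theorem gumbel_min_log_cdf_strictly_concave :
    StrictConcaveOn ℝ Set.univ
      (fun t : ℝ => Real.log (1 - Real.exp (-Real.exp t))) ∧
    StrictConcaveOn ℝ Set.univ
      (fun t : ℝ => Real.log (1 - (1 - Real.exp (-Real.exp t)))) := by
  constructor
  · apply StrictAnti.strictConcaveOn_univ_of_deriv
    · have hc : Continuous fun t : ℝ => 1 - Real.exp (-Real.exp t) := by fun_prop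
      exact hc.log fun t => (gumbel_aux_pos t).ne'
    · have hderiv : deriv (fun t : ℝ => Real.log (1 - Real.exp (-Real.exp t)))
          = fun t => Real.exp t / (Real.exp (Real.exp t) - 1) := by
        funext t; exact (gumbel_hasDerivAt t).deriv
      rw [hderiv]
      intro s t hst
      have ha : 0 < Real.exp s := Real.exp_pos s
      have hab : Real.exp s < Real.exp t := Real.exp_lt_exp.mpr hst
      have hs := gumbel_slope (Real.exp s) (Real.exp t) ha hab
      have h1 : 0 < Real.exp (Real.exp s) - 1 := by
        nlinarith [Real.add_one_le_exp (Real.exp s), ha]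
      have h2 : 0 < Real.exp (Real.exp t) - 1 := by
        nlinarith [Real.add_one_le_exp (Real.exp t), ha, hab]
      rw [div_lt_div_iff₀ ha (ha.trans hab)] at hs
      rw [div_lt_div_iff₀ h2 h1]
      nlinarith
  · have heq : (fun t : ℝ => Real.log (1 - (1 - Real.exp (-Real.exp t))))
        = fun t : ℝ => -Real.exp t := by
      funext t
      rw [show 1 - (1 - Real.exp (-Real.exp t)) = Real.exp (-Real.exp t) by ring,
        Real.log_exp]
    rw [heq]
    exact strictConvexOn_exp.neg
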